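/- Let (C, S, W) be a category with strong and weak equivalences and M an object of C. Then M is cofibrant if and only if for every object X of C, the map γ'_X : C[S⁻¹](M, X) → C[W⁻¹](M, X) induced by the canonical functor γ' : C[S⁻¹] → C[W⁻¹] is bijective. -/

import Mathlib

open CategoryTheory

universe v u

variable {C : Type u} [Category.{v} C]

/-- `(C, S, W)` is a category with strong and weak equivalences. -/
structure StrongWeak (S W : MorphismProperty C) : Prop where
  comp_S : ∀ ⦃X Y Z : C⦄ (f : X ⟶ Y) (g : Y ⟶ Z), S f → S g → S (f ≫ g)
  comp_W : ∀ ⦃X Y Z : C⦄ (f : X ⟶ Y) (g : Y ⟶ Z), W f → W g → W (f ≫ g)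
  iso_S : ∀ ⦃X Y : C⦄ (f : X ⟶ Y), IsIso f → S f
  iso_W : ∀ ⦃X Y : C⦄ (f : X ⟶ Y), IsIso f → W f
  le_sat : ∀ ⦃X Y : C⦄ (f : X ⟶ Y), S f → IsIso (W.Q.map f)

/-- An object `M` is `(S, W)`-cofibrant. -/
def Cofibrant (S W : MorphismProperty C) (M : C) : Prop :=
  ∀ ⦃Y X : C⦄ (w : Y ⟶ X), W w →
    Function.Bijective (fun g : S.Q.obj M ⟶ S.Q.obj Y => g ≫ S.Q.map w)

/-- Since `S` is contained in the saturation of `W`, the localisation functor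
`γ : C ⥤ C[W⁻¹]` factors through `δ : C ⥤ C[S⁻¹]` via `γ' : C[S⁻¹] ⥤ C[W⁻¹]`. -/
noncomputable def gammaPrime (S W : MorphismProperty C)
    (h : ∀ ⦃X Y : C⦄ (f : X ⟶ Y), S f → IsIso (W.Q.map f)) :
    S.Localization ⥤ W.Localization :=
  Localization.Construction.lift W.Q (fun _ _ f hf => h f hf)

/- ### Auxiliary material -/

/-- Equal functors have heterogeneously equal actions on morphisms. -/
lemma mapHEq {D : Type*} {E : Type*} [Category D] [Category E] {H₁ H₂ : D ⥤ E}
    (h : H₁ = H₂) {X Y : D} (f : X ⟶ Y) : HEq (H₁.map f) (H₂.map f) := by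
  subst h; rfl

lemma gammaPrime_fac (S W : MorphismProperty C)
    (h : ∀ ⦃X Y : C⦄ (f : X ⟶ Y), S f → IsIso (W.Q.map f)) :
    S.Q ⋙ gammaPrime S W h = W.Q :=
  Localization.Construction.fac _ _

lemma gammaPrime_map_Q (S W : MorphismProperty C)
    (h : ∀ ⦃X Y : C⦄ (f : X ⟶ Y), S f → IsIso (W.Q.map f))
    {X Y : C} (f : X ⟶ Y) :
    (gammaPrime S W h).map (S.Q.map f) = W.Q.map f :=
  eq_of_heq (mapHEq (gammaPrime_fac S W h) f)

/-- The corepresentable functor `Hom_{C[S⁻¹]}(δM, δ(-))` on `C`. -/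
noncomputable def Faux (S : MorphismProperty C) (M : C) : C ⥤ Type (max u v) :=
  S.Q ⋙ coyoneda.obj (Opposite.op (S.Q.obj M))

lemma Faux_inverts (S W : MorphismProperty C) (M : C) (h : Cofibrant S W M) :
    W.IsInvertedBy (Faux S M) :=
  fun _ _ w hw => (isIso_iff_bijective _).2 (h w hw)

/-- The lift of `Faux` to `C[W⁻¹]` given that `M` is cofibrant. -/
noncomputable def Gaux (S W : MorphismProperty C) (M : C) (h : Cofibrant S W M) :
    W.Localization ⥤ Type (max u v) :=
  Localization.Construction.lift (Faux S M) (Faux_inverts S W M h)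

lemma Gaux_fac (S W : MorphismProperty C) (M : C) (h : Cofibrant S W M) :
    W.Q ⋙ Gaux S W M h = Faux S M :=
  Localization.Construction.fac _ _

lemma Gaux_map_Q (S W : MorphismProperty C) (M : C) (h : Cofibrant S W M)
    {X Y : C} (f : X ⟶ Y) :
    (Gaux S W M h).map (W.Q.map f) = (Faux S M).map f :=
  eq_of_heq (mapHEq (Gaux_fac S W M h) f)

lemma Gaux_comp_gammaPrime (S W : MorphismProperty C)
    (hl : ∀ ⦃X Y : C⦄ (f : X ⟶ Y), S f → IsIso (W.Q.map f))
    (M : C) (h : Cofibrant S W M) :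
    gammaPrime S W hl ⋙ Gaux S W M h = coyoneda.obj (Opposite.op (S.Q.obj M)) := by
  apply Localization.Construction.uniq
  rw [← Functor.assoc, gammaPrime_fac, Gaux_fac]
  rfl

lemma Gaux_map_gammaPrime (S W : MorphismProperty C)
    (hl : ∀ ⦃X Y : C⦄ (f : X ⟶ Y), S f → IsIso (W.Q.map f))
    (M : C) (h : Cofibrant S W M) {A B : S.Localization} (g : A ⟶ B) :
    (Gaux S W M h).map ((gammaPrime S W hl).map g)
      = (coyoneda.obj (Opposite.op (S.Q.obj M))).map g :=
  eq_of_heq (mapHEq (Gaux_comp_gammaPrime S W hl M h) g)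

/-- The comparison natural transformation on `C`. -/
noncomputable def tauAux (S W : MorphismProperty C)
    (hl : ∀ ⦃X Y : C⦄ (f : X ⟶ Y), S f → IsIso (W.Q.map f))
    (M : C) (h : Cofibrant S W M) :
    W.Q ⋙ Gaux S W M h ⟶ W.Q ⋙ coyoneda.obj (Opposite.op (W.Q.obj M)) where
  app Y := TypeCat.ofHom (fun g => (gammaPrime S W hl).map g)
  naturality := by
    intro X Y f
    ext g
    change (gammaPrime S W hl).map ((Gaux S W M h).map (W.Q.map f) g)
      = (gammaPrime S W hl).map g ≫ W.Q.map f
    rw [Gaux_map_Q S W M h f]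
    change (gammaPrime S W hl).map (g ≫ S.Q.map f)
      = (gammaPrime S W hl).map g ≫ W.Q.map f
    exact ((gammaPrime S W hl).map_comp g (S.Q.map f)).trans (congrArg _ (gammaPrime_map_Q S W hl f))

lemma tauAux_app (S W : MorphismProperty C)
    (hl : ∀ ⦃X Y : C⦄ (f : X ⟶ Y), S f → IsIso (W.Q.map f))
    (M : C) (h : Cofibrant S W M) (Y : C) (g : (W.Q ⋙ Gaux S W M h).obj Y) :
    (tauAux S W hl M h).app Y g = (gammaPrime S W hl).map g :=
  rfl

/-- `M` is cofibrant if and only if for every object `X`, the map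
`C[S⁻¹](M, X) → C[W⁻¹](M, X)` induced by `γ'` is bijective. -/
theorem cofibrant_iff_gammaPrime_bijective (S W : MorphismProperty C)
    (hsw : StrongWeak S W) (M : C) :
    Cofibrant S W M ↔ ∀ X : C,
      Function.Bijective (fun g : S.Q.obj M ⟶ S.Q.obj X =>
        (gammaPrime S W hsw.le_sat).map g) := by
  constructor
  · -- forward direction: cofibrant implies γ' bijective on homs from M
    intro hcof X
    have leftinv : ∀ g : S.Q.obj M ⟶ S.Q.obj X,
        (Gaux S W M hcof).map ((gammaPrime S W hsw.le_sat).map g) (𝟙 (S.Q.obj M)) = g := by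
      intro g
      rw [Gaux_map_gammaPrime S W hsw.le_sat M hcof g]
      simp
      exact Category.id_comp g
    have key : ∀ (φ : W.Q.obj M ⟶ W.Q.obj X),
        (gammaPrime S W hsw.le_sat).map ((Gaux S W M hcof).map φ (𝟙 (S.Q.obj M))) = φ := by
      intro φ
      have hnat := (Localization.Construction.natTransExtension
        (tauAux S W hsw.le_sat M hcof)).naturality φ
      have h1 := ConcreteCategory.congr_hom hnat (𝟙 (S.Q.obj M))
      simp only [types_comp_apply, Localization.Construction.natTransExtension_app,
        Localization.Construction.NatTransExtension.app_eq] at h1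
      change (gammaPrime S W hsw.le_sat).map ((Gaux S W M hcof).map φ (𝟙 (S.Q.obj M)))
        = (gammaPrime S W hsw.le_sat).map (𝟙 (S.Q.obj M)) ≫ φ at h1
      exact h1.trans (Category.id_comp φ)
    constructor
    · intro a b hab
      have hab' : (gammaPrime S W hsw.le_sat).map a = (gammaPrime S W hsw.le_sat).map b := hab
      rw [← leftinv a, ← leftinv b, hab']
    · intro φ
      exact ⟨(Gaux S W M hcof).map φ (𝟙 (S.Q.obj M)), key φ⟩
  · -- backward direction
    intro hbij Y X w hw
    have hiso : IsIso ((gammaPrime S W hsw.le_sat).map (S.Q.map w)) := by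
      rw [gammaPrime_map_Q S W hsw.le_sat w]
      exact W.Q_inverts w hw
    have hb : Function.Bijective
        (fun φ : (gammaPrime S W hsw.le_sat).obj (S.Q.obj M) ⟶
            (gammaPrime S W hsw.le_sat).obj (S.Q.obj Y) =>
          φ ≫ (gammaPrime S W hsw.le_sat).map (S.Q.map w)) := by
      constructor
      · intro a b hab
        have := hab =≫ inv ((gammaPrime S W hsw.le_sat).map (S.Q.map w))
        simpa using this
      · intro φ
        exact ⟨φ ≫ inv ((gammaPrime S W hsw.le_sat).map (S.Q.map w)), by simp⟩
    have hcomm : (fun g : S.Q.obj M ⟶ S.Q.obj X => (gammaPrime S W hsw.le_sat).map g) ∘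
          (fun g : S.Q.obj M ⟶ S.Q.obj Y => g ≫ S.Q.map w)
        = (fun φ => φ ≫ (gammaPrime S W hsw.le_sat).map (S.Q.map w)) ∘
          (fun g : S.Q.obj M ⟶ S.Q.obj Y => (gammaPrime S W hsw.le_sat).map g) := by
      funext g
      exact Functor.map_comp _ _ _
    have h2 := hb.comp (hbij Y)
    rw [← hcomm] at h2
    exact (Function.Bijective.of_comp_iff' (hbij X) _).1 h2
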